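/- Let μ, γ, φ, β, Cs, Ci, Cr be positive real numbers and suppose (s, i, r) ∈ ℝ³ satisfies s + i + r = 1, i > 0, s·Cs + i·Ci + r·Cr > 0, and the equilibrium equations 0 = -g·β·s·i + μ - μ·s, 0 = g·β·s·i + φ·r·i - (γ + μ)·i, 0 = γ·i - φ·r·i - μ·r, where g = Cs·Ci/(s·Cs + i·Ci + r·Cr). Set κ = Ci/Cs, θ = Cr/Cs, Rμ = μ/(μ + γ), Rφ = φ/(μ + γ), R₀ = β·Ci/(γ + μ). Then r = γ·i/(φ·i + μ), s = 1 - i - γ·i/(φ·i + μ), and i satisfies the cubic equation a₃·i³ + a₂·i² + a₁·i + a₀ = 0, where a₃ = Rφ²·R₀ - Rμ·Rφ²·(1-κ), a₂ = Rφ·[R₀·(1-Rφ) + Rμ·(R₀+Rφ) - Rμ·(1-Rμ)·(1-θ) - Rμ·(1+Rμ)·(1-κ)], a₁ = Rμ·[R₀·(1-Rφ) + Rφ·(1-R₀) - (1-Rμ)·(1-θ) + Rμ·Rφ - Rμ·(1-κ)], a₀ = Rμ²·(1-R₀). -/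

import Mathlib

/-- At an endemic equilibrium `(s,i,r)` of the rescaled SIR model with
nonlinear relapse and constant contact rates, the recovered and susceptible
components are determined by `i`, and `i` satisfies the cubic equation
`a₃·i³ + a₂·i² + a₁·i + a₀ = 0` with the stated coefficients. -/
theorem endemic_equilibrium_cubic
    (μ γ φ β Cs Ci Cr : ℝ)
    (hμ : 0 < μ) (hγ : 0 < γ) (hφ : 0 < φ) (hβ : 0 < β)
    (hCs : 0 < Cs) (hCi : 0 < Ci) (hCr : 0 < Cr)
    (s i r : ℝ) (hsum : s + i + r = 1) (hi : 0 < i)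
    (hden : 0 < s * Cs + i * Ci + r * Cr)
    (g : ℝ) (hg : g = Cs * Ci / (s * Cs + i * Ci + r * Cr))
    (heq1 : 0 = -(g * β * s * i) + μ - μ * s)
    (heq2 : 0 = g * β * s * i + φ * r * i - (γ + μ) * i)
    (heq3 : 0 = γ * i - φ * r * i - μ * r)
    (κ θ Rμ Rφ R₀ : ℝ)
    (hκ : κ = Ci / Cs) (hθ : θ = Cr / Cs)
    (hRμ : Rμ = μ / (μ + γ)) (hRφ : Rφ = φ / (μ + γ))
    (hR₀ : R₀ = β * Ci / (γ + μ))
    (a₀ a₁ a₂ a₃ : ℝ)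
    (ha₃ : a₃ = Rφ ^ 2 * R₀ - Rμ * Rφ ^ 2 * (1 - κ))
    (ha₂ : a₂ = Rφ * (R₀ * (1 - Rφ) + Rμ * (R₀ + Rφ)
      - Rμ * (1 - Rμ) * (1 - θ) - Rμ * (1 + Rμ) * (1 - κ)))
    (ha₁ : a₁ = Rμ * (R₀ * (1 - Rφ) + Rφ * (1 - R₀)
      - (1 - Rμ) * (1 - θ) + Rμ * Rφ - Rμ * (1 - κ)))
    (ha₀ : a₀ = Rμ ^ 2 * (1 - R₀)) :
    r = γ * i / (φ * i + μ) ∧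
      s = 1 - i - γ * i / (φ * i + μ) ∧
      a₃ * i ^ 3 + a₂ * i ^ 2 + a₁ * i + a₀ = 0 := by
  have hi' : i ≠ 0 := hi.ne'
  have hP : (0:ℝ) < φ * i + μ := by positivity
  have hP' : φ * i + μ ≠ 0 := hP.ne'
  have hM : μ + γ ≠ 0 := by positivity
  have hM2 : γ + μ ≠ 0 := by positivity
  have hCs' : Cs ≠ 0 := hCs.ne'
  have hD : s * Cs + i * Ci + r * Cr ≠ 0 := hden.ne'
  have heq3' : r * (φ * i + μ) = γ * i := by linear_combination heq3
  have hr : r = γ * i / (φ * i + μ) := by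
    field_simp
    linear_combination heq3'
  have hs : s = 1 - i - γ * i / (φ * i + μ) := by
    rw [← hr]; linarith [hsum]
  refine ⟨hr, hs, ?_⟩
  have h := heq2
  rw [hg] at h
  have hE : Cs * Ci * β * s * i = ((γ + μ) - φ * r) * (s * Cs + i * Ci + r * Cr) * i := by
    field_simp at h
    have hgD : g * (s * Cs + i * Ci + r * Cr) = Cs * Ci := by rw [hg]; exact div_mul_cancel₀ _ hD
    linear_combination (-(s * Cs + i * Ci + r * Cr)) * heq2 - (β * s * i) * hgD
  have hE' : Cs * Ci * β * s = ((γ + μ) - φ * r) * (s * Cs + i * Ci + r * Cr) :=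
    mul_right_cancel₀ hi' hE
  have h2 : Cs * Ci * β * ((1 - i) * (φ * i + μ) - γ * i) * (φ * i + μ)
      = ((μ + γ) * (φ * i + μ) - φ * γ * i)
        * (((1 - i) * (φ * i + μ) - γ * i) * Cs + i * (φ * i + μ) * Ci + γ * i * Cr) := by
    linear_combination (φ * i + μ) ^ 2 * hE'
      + (Cs * (φ * i + μ) ^ 2 * ((μ + γ) - β * Ci - φ * r)) * hsum
      + (φ * β * Cs * Ci * i - φ ^ 2 * Ci * i ^ 2 - φ ^ 2 * Cs * i + φ ^ 2 * Cs * i ^ 2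
        + μ * β * Cs * Ci + μ * φ * Cr * i - μ * φ * Ci * i - μ * φ * Cs + μ * γ * Cr
        - μ * γ * Cs + μ ^ 2 * Cr - μ ^ 2 * Cs - r * φ ^ 2 * Cr * i + r * φ ^ 2 * Cs * i
        - r * μ * φ * Cr + r * μ * φ * Cs) * heq3'
  have hclear : (a₃ * i ^ 3 + a₂ * i ^ 2 + a₁ * i + a₀) * (Cs * (μ + γ) ^ 3)
      = (φ ^ 2 * β * Ci * Cs - μ * φ ^ 2 * (Cs - Ci)) * i ^ 3
        + (φ * (β * Ci * ((μ + γ) - φ) * Cs + μ * (β * Ci + φ) * Cs - μ * γ * (Cs - Cr)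
            - μ * ((μ + γ) + μ) * (Cs - Ci))) * i ^ 2
        + (μ * (β * Ci * ((μ + γ) - φ) * Cs + φ * ((μ + γ) - β * Ci) * Cs
            - γ * (μ + γ) * (Cs - Cr) + μ * φ * Cs - μ * (μ + γ) * (Cs - Ci))) * i
        + μ ^ 2 * ((μ + γ) - β * Ci) * Cs := by
    subst ha₃ ha₂ ha₁ ha₀ hκ hθ hRμ hRφ hR₀
    field_simp
    ring
  have hQ : (φ ^ 2 * β * Ci * Cs - μ * φ ^ 2 * (Cs - Ci)) * i ^ 3
        + (φ * (β * Ci * ((μ + γ) - φ) * Cs + μ * (β * Ci + φ) * Cs - μ * γ * (Cs - Cr)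
            - μ * ((μ + γ) + μ) * (Cs - Ci))) * i ^ 2
        + (μ * (β * Ci * ((μ + γ) - φ) * Cs + φ * ((μ + γ) - β * Ci) * Cs
            - γ * (μ + γ) * (Cs - Cr) + μ * φ * Cs - μ * (μ + γ) * (Cs - Ci))) * i
        + μ ^ 2 * ((μ + γ) - β * Ci) * Cs = 0 := by
    linear_combination -h2
  have hne : Cs * (μ + γ) ^ 3 ≠ 0 := by positivity
  have hz : (a₃ * i ^ 3 + a₂ * i ^ 2 + a₁ * i + a₀) * (Cs * (μ + γ) ^ 3) = 0 := by
    rw [hclear, hQ]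
  exact (mul_eq_zero.mp hz).resolve_right hne
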